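/- Let A, B be binary strings with 1(A) = 0(B) = α = min{0(A),0(B),1(A),1(B)}. Write A = L_A ++ M_A ++ R_A and B = L_B ++ M_B ++ R_B with |L_A| = |R_A| = |L_B| = |R_B| = α. Suppose 1(R_B) < α/2 − 4β and 0(R_A) ≤ α/2 + 2β for some β > 0. Then LCS(A,B) ≤ 2α − 2β. -/

import Mathlib

/-- Length of the longest common subsequence of two binary strings. -/
def lcsLen (A B : List Bool) : ℕ :=
  ((A.sublists.filter (fun c => decide (c.Sublist B))).map List.length).foldr max 0

lemma le_foldr_max {a : ℕ} {l : List ℕ} (h : a ∈ l) : a ≤ l.foldr max 0 := by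
  induction l with
  | nil => simp at h
  | cons b t ih =>
    rcases List.mem_cons.1 h with rfl | h
    · exact le_max_left _ _
    · exact le_trans (ih h) (le_max_right _ _)

lemma foldr_max_mem (l : List ℕ) : l.foldr max 0 = 0 ∨ l.foldr max 0 ∈ l := by
  induction l with
  | nil => simp
  | cons b t ih =>
    simp only [List.foldr_cons]
    rcases le_total b (t.foldr max 0) with h | h
    · rw [max_eq_right h]
      rcases ih with h0 | hm
      · exact Or.inl h0
      · exact Or.inr (List.mem_cons_of_mem _ hm)
    · rw [max_eq_left h]
      exact Or.inr List.mem_cons_self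

lemma lcsLen_ge {A B c : List Bool} (h1 : c.Sublist A) (h2 : c.Sublist B) :
    c.length ≤ lcsLen A B := by
  apply le_foldr_max
  apply List.mem_map_of_mem
  rw [List.mem_filter]
  exact ⟨List.mem_sublists.2 h1, by simpa using h2⟩

lemma lcsLen_exists (A B : List Bool) :
    ∃ c : List Bool, c.Sublist A ∧ c.Sublist B ∧ c.length = lcsLen A B := by
  have h := foldr_max_mem ((A.sublists.filter (fun c => decide (c.Sublist B))).map List.length)
  rcases h with h0 | hm
  · exact ⟨[], List.nil_sublist _, List.nil_sublist _, by simp [lcsLen, h0]⟩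
  · obtain ⟨c, hc, hlen⟩ := List.mem_map.1 hm
    rw [List.mem_filter] at hc
    exact ⟨c, List.mem_sublists.1 hc.1, by simpa using hc.2, hlen⟩

lemma bool_length (c : List Bool) : c.length = c.count false + c.count true :=
  (List.count_false_add_count_true c).symm

lemma lcsLen_split (A1 A2 B : List Bool) :
    ∃ B1 B2, B = B1 ++ B2 ∧ lcsLen (A1 ++ A2) B ≤ lcsLen A1 B1 + lcsLen A2 B2 := by
  obtain ⟨c, hcA, hcB, hlen⟩ := lcsLen_exists (A1 ++ A2) B
  rw [List.sublist_append_iff] at hcA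
  obtain ⟨c1, c2, rfl, h1, h2⟩ := hcA
  rw [List.append_sublist_iff] at hcB
  obtain ⟨B1, B2, rfl, hb1, hb2⟩ := hcB
  refine ⟨B1, B2, rfl, ?_⟩
  rw [← hlen, List.length_append]
  exact add_le_add (lcsLen_ge h1 hb1) (lcsLen_ge h2 hb2)

lemma lcsLen_le_counts (x y : List Bool) :
    lcsLen x y ≤ min (x.count false) (y.count false) + min (x.count true) (y.count true) := by
  obtain ⟨c, hx, hy, hlen⟩ := lcsLen_exists x y
  rw [← hlen, bool_length]
  exact add_le_add (le_min (hx.count_le false) (hy.count_le false))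
    (le_min (hx.count_le true) (hy.count_le true))

lemma suffix_of_suffix_length_le {l1 l2 l : List Bool} (h1 : l1 <:+ l) (h2 : l2 <:+ l)
    (h : l1.length ≤ l2.length) : l1 <:+ l2 := by
  rw [← List.reverse_prefix] at h1 h2 ⊢
  exact List.prefix_of_prefix_length_le h1 h2 (by simpa using h)

theorem case_1b (A B LA MA RA LB MB RB : List Bool) (α : ℕ) (β : ℝ) (hβ : 0 < β)
    (h1A : A.count true = α) (h0B : B.count false = α)
    (hmin : α = min (min (A.count false) (B.count false)) (min (A.count true) (B.count true)))
    (hA : A = LA ++ MA ++ RA) (hB : B = LB ++ MB ++ RB)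
    (hLA : LA.length = α) (hRA : RA.length = α) (hLB : LB.length = α) (hRB : RB.length = α)
    (h1RB : (RB.count true : ℝ) < (α : ℝ) / 2 - 4 * β)
    (h0RA : (RA.count false : ℝ) ≤ (α : ℝ) / 2 + 2 * β) :
    (lcsLen A B : ℝ) ≤ 2 * (α : ℝ) - 2 * β := by
  subst hA
  obtain ⟨B1, B2, hBsplit, hsplit⟩ := lcsLen_split (LA ++ MA) RA B
  -- count identities
  have hRAlen : RA.count false + RA.count true = α := by rw [← bool_length]; exact hRA
  have hRBlen : RB.count false + RB.count true = α := by rw [← bool_length]; exact hRB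
  have h1sum : (LA ++ MA).count true + RA.count true = α := by
    rw [← List.count_append]; exact h1A
  have h0Bsum : B1.count false + B2.count false = α := by
    rw [← List.count_append, ← hBsplit]; exact h0B
  have hRBsuf : RB <:+ B := by rw [hB, List.append_assoc]; exact (List.suffix_append MB RB).trans (List.suffix_append LB _)
  have hB2suf : B2 <:+ B := by rw [hBsplit]; exact List.suffix_append _ _
  have hBound1 := lcsLen_le_counts (LA ++ MA) B1
  have hBound2 := lcsLen_le_counts RA B2
  by_cases hc : B2.length ≤ RB.length
  · -- B2 is a suffix of RB
    have hsub : B2.Sublist RB := (suffix_of_suffix_length_le hB2suf hRBsuf hc).sublist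
    have h1B2 : B2.count true ≤ RB.count true := hsub.count_le true
    have key : lcsLen (LA ++ MA ++ RA) B ≤
        B1.count false + (LA ++ MA).count true + (B2.count false + RB.count true) := by
      refine hsplit.trans (add_le_add (hBound1.trans ?_) (hBound2.trans ?_))
      · exact add_le_add (min_le_right _ _) (min_le_left _ _)
      · exact add_le_add (min_le_right _ _) ((min_le_right _ _).trans h1B2)
    have key' : (lcsLen (LA ++ MA ++ RA) B : ℝ) ≤
        (B1.count false : ℝ) + (LA ++ MA).count true + (B2.count false + RB.count true) := by
      exact_mod_cast key
    have e1 : ((RA.count false : ℝ)) + RA.count true = α := by exact_mod_cast hRAlen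
    have e2 : ((LA ++ MA).count true : ℝ) + RA.count true = α := by exact_mod_cast h1sum
    have e3 : ((B1.count false : ℝ)) + B2.count false = α := by exact_mod_cast h0Bsum
    linarith
  · -- RB is a suffix of B2
    push_neg at hc
    have hsub : RB.Sublist B2 := (suffix_of_suffix_length_le hRBsuf hB2suf hc.le).sublist
    have h0B2 : RB.count false ≤ B2.count false := hsub.count_le false
    have key : lcsLen (LA ++ MA ++ RA) B ≤
        B1.count false + (LA ++ MA).count true + (RA.count false + RA.count true) := by
      refine hsplit.trans (add_le_add (hBound1.trans ?_) (hBound2.trans ?_))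
      · exact add_le_add (min_le_right _ _) (min_le_left _ _)
      · exact add_le_add (min_le_left _ _) (min_le_left _ _)
    have h0B1 : B1.count false ≤ RB.count true := by omega
    have e1 : ((RA.count false : ℝ)) + RA.count true = α := by exact_mod_cast hRAlen
    have e2 : ((LA ++ MA).count true : ℝ) + RA.count true = α := by exact_mod_cast h1sum
    have h0B1' : ((B1.count false : ℝ)) ≤ RB.count true := by exact_mod_cast h0B1
    have key' : (lcsLen (LA ++ MA ++ RA) B : ℝ) ≤
        (B1.count false : ℝ) + (LA ++ MA).count true + (RA.count false + RA.count true) := by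
      exact_mod_cast key
    linarith
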